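/- Let n ≥ 1 and let f₀, f₁, …, f_{k−1} : (Fin n → Bool) → (Fin n → Bool) be functions each of which has a pass-through coordinate, and let f = f_{k−1} ∘ f_{k−2} ∘ ⋯ ∘ f₀. Then f is not a quasi-bijection. -/

import Mathlib

/-- `j` is a pass-through coordinate of `f`: `f` copies coordinate `j` through,
and no other output coordinate depends on input coordinate `j`. -/
def PassThrough {n : ℕ} (f : (Fin n → Bool) → (Fin n → Bool)) (j : Fin n) : Prop :=
  (∀ x, f x j = x j) ∧
  ∀ l : Fin n, l ≠ j → ∀ x x' : Fin n → Bool,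
    (∀ i : Fin n, i ≠ j → x i = x' i) → f x l = f x' l

/-- `f` is a quasi-bijection if exactly one element has no preimage under `f`. -/
def QuasiBijective {α : Type*} (f : α → α) : Prop :=
  ∃! y : α, ∀ x : α, f x ≠ y

/-- The composition `f_{k-1} ∘ f_{k-2} ∘ ⋯ ∘ f₀` of a finite family of self-maps
(`f 0` is applied first). -/
def compFamily {α : Type*} {k : ℕ} (f : Fin k → α → α) : α → α :=
  (List.ofFn f).foldl (fun acc g => g ∘ acc) id

namespace PTaux

variable {n : ℕ}

/-- flip coordinate `j` -/
def flip (j : Fin n) (x : Fin n → Bool) : Fin n → Bool :=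
  Function.update x j (!(x j))

lemma flip_j (j : Fin n) (x : Fin n → Bool) : flip j x j = !(x j) := by
  simp [flip]

lemma flip_ne (j : Fin n) (x : Fin n → Bool) {i : Fin n} (h : i ≠ j) :
    flip j x i = x i := by
  simp [flip, Function.update_of_ne h]

lemma flip_flip (j : Fin n) (x : Fin n → Bool) : flip j (flip j x) = x := by
  funext i
  by_cases h : i = j
  · subst h; simp [flip_j]
  · rw [flip_ne j _ h, flip_ne j _ h]

lemma comm_flip {g : (Fin n → Bool) → (Fin n → Bool)} {j : Fin n}
    (hg : PassThrough g j) (x : Fin n → Bool) : g (flip j x) = flip j (g x) := by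
  funext i
  by_cases h : i = j
  · subst h
    rw [hg.1, flip_j, flip_j, hg.1]
  · rw [flip_ne j _ h]
    exact hg.2 i h _ _ (fun i' hi' => flip_ne j x hi')

lemma inj_of_half {g : (Fin n → Bool) → (Fin n → Bool)} {j : Fin n}
    (hg : PassThrough g j) (c : Bool)
    (hsurj : ∀ y : Fin n → Bool, y j = c → ∃ x, g x = y) :
    Function.Injective g := by
  -- the restriction of `g` to the half `{x | x j = c}` as a self-map
  let g' : {x : Fin n → Bool // x j = c} → {x : Fin n → Bool // x j = c} :=
    fun x => ⟨g x.1, by rw [hg.1]; exact x.2⟩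
  have hsurj' : Function.Surjective g' := by
    rintro ⟨y, hy⟩
    obtain ⟨x, hx⟩ := hsurj y hy
    have hxj : x j = c := by rw [← hg.1 x, hx]; exact hy
    exact ⟨⟨x, hxj⟩, Subtype.ext hx⟩
  have hinj' : Function.Injective g' :=
    (Finite.injective_iff_surjective).2 hsurj'
  have hinjOn : ∀ x₁ x₂ : Fin n → Bool, x₁ j = c → x₂ j = c →
      g x₁ = g x₂ → x₁ = x₂ := by
    intro x₁ x₂ h1 h2 h
    have := hinj' (a₁ := ⟨x₁, h1⟩) (a₂ := ⟨x₂, h2⟩) (Subtype.ext h)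
    exact congrArg Subtype.val this
  intro x₁ x₂ h
  have hj : x₁ j = x₂ j := by rw [← hg.1 x₁, ← hg.1 x₂, h]
  by_cases hc : x₁ j = c
  · exact hinjOn x₁ x₂ hc (hj ▸ hc) h
  · have hb : (!(x₁ j)) = c := by
      revert hc; cases c <;> cases hx : x₁ j <;> simp
    have hc1 : flip j x₁ j = c := by rw [flip_j]; exact hb
    have hc2 : flip j x₂ j = c := by rw [flip_j, ← hj]; exact hb
    have hflipeq : g (flip j x₁) = g (flip j x₂) := by
      rw [comm_flip hg, comm_flip hg, h]
    have := hinjOn _ _ hc1 hc2 hflipeq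
    have := congrArg (flip j) this
    rwa [flip_flip, flip_flip] at this

open Finset

lemma aux (L : List ((Fin n → Bool) → (Fin n → Bool)))
    (hL : ∀ g ∈ L, ∃ j, PassThrough g j) :
    ∀ S : Finset (Fin n → Bool),
      (S.image (L.foldl (fun acc g => g ∘ acc) id)).card
        = Fintype.card (Fin n → Bool) - 1 →
      S.card = Fintype.card (Fin n → Bool) - 1 := by
  set N := Fintype.card (Fin n → Bool) with hN
  have hNpos : 1 ≤ N := Fintype.card_pos
  induction L using List.reverseRecOn with
  | nil =>
      intro S hS
      simpa using hS
  | append_singleton L g ih =>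
      intro S hS
      have hcomp : (L ++ [g]).foldl (fun acc g => g ∘ acc) id
          = g ∘ (L.foldl (fun acc g => g ∘ acc) id) := by
        simp [List.foldl_append]
      rw [hcomp, ← Finset.image_image] at hS
      set T : Finset (Fin n → Bool) := S.image (L.foldl (fun acc g => g ∘ acc) id)
        with hT
      obtain ⟨j, hgj⟩ := hL g (by simp)
      -- the missed set is a singleton
      have hcard : (univ \ T.image g).card = 1 := by
        rw [Finset.card_sdiff_of_subset (Finset.subset_univ _), Finset.card_univ, ← hN, hS]
        omega
      obtain ⟨y, hy⟩ := Finset.card_eq_one.1 hcard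
      have hmem : ∀ z : Fin n → Bool, z ≠ y → z ∈ T.image g := by
        intro z hz
        by_contra hzn
        have : z ∈ univ \ T.image g := by
          simp [Finset.mem_sdiff, hzn]
        rw [hy] at this
        exact hz (Finset.mem_singleton.1 this)
      have hsurj : ∀ z : Fin n → Bool, z j = !(y j) → ∃ x, g x = z := by
        intro z hzj
        have hzy : z ≠ y := by
          intro hzy; rw [hzy] at hzj; simp at hzj
        obtain ⟨x, _, hx⟩ := Finset.mem_image.1 (hmem z hzy)
        exact ⟨x, hx⟩
      have hinj : Function.Injective g := inj_of_half hgj (!(y j)) hsurj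
      have hTcard : T.card = N - 1 := by
        rw [← Finset.card_image_of_injective T hinj, hS]
      exact ih (fun g' hg' => hL g' (by simp [hg'])) S hTcard

end PTaux

theorem comp_passThrough_not_quasiBijective {n : ℕ} (hn : 1 ≤ n) {k : ℕ}
    (f : Fin k → (Fin n → Bool) → (Fin n → Bool))
    (hpass : ∀ i : Fin k, ∃ j : Fin n, PassThrough (f i) j) :
    ¬ QuasiBijective (compFamily f) := by
  intro hq
  obtain ⟨y, hy, hu⟩ := hq
  set F := compFamily f with hF
  set N := Fintype.card (Fin n → Bool) with hN
  have hNpos : 1 ≤ N := Fintype.card_pos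
  have hmiss : Finset.univ \ Finset.univ.image F = {y} := by
    ext z
    simp only [Finset.mem_sdiff, Finset.mem_univ, true_and, Finset.mem_image,
      Finset.mem_singleton, not_exists]
    constructor
    · intro h
      exact hu z (fun x => by simpa using h x)
    · intro h
      subst h
      intro x hx
      exact hy x (by simpa using hx)
  have hcard1 : (Finset.univ \ Finset.univ.image F).card = 1 := by
    rw [hmiss]; simp
  have hle : (Finset.univ.image F).card ≤ N := by
    rw [hN, ← Finset.card_univ]
    exact Finset.card_le_card (Finset.subset_univ _)
  have himg : (Finset.univ.image F).card = N - 1 := by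
    rw [Finset.card_sdiff_of_subset (Finset.subset_univ _), Finset.card_univ, ← hN] at hcard1
    omega
  have hLpass : ∀ g ∈ List.ofFn f, ∃ j, PassThrough g j := by
    intro g hg
    obtain ⟨i, hi⟩ := (List.mem_ofFn).1 hg
    exact hi ▸ hpass i
  have := PTaux.aux (List.ofFn f) hLpass Finset.univ (by
    exact himg)
  rw [Finset.card_univ, ← hN] at this
  omega
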